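/- For positive integers x_1, ..., x_m, the number ES(x_1,...,x_m) of sign vectors (ε_1,...,ε_m) ∈ {-1,1}^m with ∑_j ε_j x_j = 0 satisfies ES(x_1,...,x_m) ≤ (2 * C(2m-1, m))^{1/2}. -/

import Mathlib

theorem stmt_6 (m : ℕ) (x : Fin m → ℕ) (hx : ∀ j, 0 < x j) :
    (Nat.card {ε : Fin m → ℤ // (∀ j, ε j = 1 ∨ ε j = -1) ∧
        ∑ j, ε j * (x j : ℤ) = 0} : ℝ) ≤
      Real.sqrt (2 * ((2 * m - 1).choose m : ℝ)) := by
  classical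
  set P : (Fin m → ℤ) → Prop :=
    fun ε => (∀ j, ε j = 1 ∨ ε j = -1) ∧ ∑ j, ε j * (x j : ℤ) = 0 with hP
  -- the solution type is finite
  have hfin : Finite {ε : Fin m → ℤ // P ε} := by
    apply Finite.of_injective (fun ε : {ε : Fin m → ℤ // P ε} =>
      (fun j => decide (ε.1 j = 1) : Fin m → Bool))
    intro ε δ h
    ext j
    have h1 := ε.2.1 j
    have h2 := δ.2.1 j
    have := congrFun h j
    rcases h1 with h1 | h1 <;> rcases h2 with h2 | h2 <;>
      simp [h1, h2] at this ⊢ <;> omega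
  letI : Fintype {ε : Fin m → ℤ // P ε} := Fintype.ofFinite _
  set T : ℤ := ∑ j, (x j : ℤ) with hT
  -- half-sum lemmas
  have key1 : ∀ ε : {ε : Fin m → ℤ // P ε},
      2 * ∑ j ∈ Finset.univ.filter (fun j => ε.1 j = 1), (x j : ℤ) = T := by
    intro ε
    have hsplit := Finset.sum_filter_add_sum_filter_not Finset.univ
      (fun j => ε.1 j = 1) (fun j => ε.1 j * (x j : ℤ))
    have hsplit2 := Finset.sum_filter_add_sum_filter_not Finset.univ
      (fun j => ε.1 j = 1) (fun j => (x j : ℤ))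
    have e1 : ∑ j ∈ Finset.univ.filter (fun j => ε.1 j = 1), ε.1 j * (x j : ℤ)
        = ∑ j ∈ Finset.univ.filter (fun j => ε.1 j = 1), (x j : ℤ) := by
      apply Finset.sum_congr rfl
      intro j hj
      rw [Finset.mem_filter] at hj
      rw [hj.2, one_mul]
    have e2 : ∑ j ∈ Finset.univ.filter (fun j => ¬ ε.1 j = 1), ε.1 j * (x j : ℤ)
        = -∑ j ∈ Finset.univ.filter (fun j => ¬ ε.1 j = 1), (x j : ℤ) := by
      rw [← Finset.sum_neg_distrib]
      apply Finset.sum_congr rfl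
      intro j hj
      rw [Finset.mem_filter] at hj
      rcases ε.2.1 j with h | h
      · exact absurd h hj.2
      · rw [h]; ring
    have h0 := ε.2.2
    rw [← hsplit, e1, e2] at h0
    rw [hT, ← hsplit2]
    linarith
  have key2 : ∀ ε : {ε : Fin m → ℤ // P ε},
      2 * ∑ j ∈ Finset.univ.filter (fun j => ¬ ε.1 j = 1), (x j : ℤ) = T := by
    intro ε
    have hsplit2 := Finset.sum_filter_add_sum_filter_not Finset.univ
      (fun j => ε.1 j = 1) (fun j => (x j : ℤ))
    have := key1 ε
    rw [hT, ← hsplit2]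
    linarith
  -- the pairing map into subsets of Fin m ⊕ Fin m
  set F : {ε : Fin m → ℤ // P ε} × {ε : Fin m → ℤ // P ε} → Finset (Fin m ⊕ Fin m) :=
    fun p => (Finset.univ.filter (fun j => p.1.1 j = 1)).disjSum
      (Finset.univ.filter (fun j => ¬ p.2.1 j = 1)) with hF
  -- each image has weight sum exactly T
  have hweight : ∀ p, ∑ a ∈ F p, Sum.elim (fun j => (x j : ℤ)) (fun j => (x j : ℤ)) a = T := by
    intro p
    rw [hF]
    rw [Finset.sum_sumElim]
    have h1 := key1 p.1
    have h2 := key2 p.2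
    linarith
  -- F is injective
  have hinj : Function.Injective F := by
    intro p q h
    rw [hF] at h
    simp only [Finset.disjSum_inj] at h
    have hfst : p.1 = q.1 := by
      apply Subtype.ext; funext j
      have : (j ∈ Finset.univ.filter (fun j => p.1.1 j = 1)) ↔
          (j ∈ Finset.univ.filter (fun j => q.1.1 j = 1)) := by rw [h.1]
      simp only [Finset.mem_filter, Finset.mem_univ, true_and] at this
      rcases p.1.2.1 j with h1 | h1 <;> rcases q.1.2.1 j with h2 | h2 <;>
        simp [h1, h2] at this ⊢
    have hsnd : p.2 = q.2 := by
      apply Subtype.ext; funext j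
      have : (j ∈ Finset.univ.filter (fun j => ¬ p.2.1 j = 1)) ↔
          (j ∈ Finset.univ.filter (fun j => ¬ q.2.1 j = 1)) := by rw [h.2]
      simp only [Finset.mem_filter, Finset.mem_univ, true_and] at this
      rcases p.2.2.1 j with h1 | h1 <;> rcases q.2.2.1 j with h2 | h2 <;>
        simp [h1, h2] at this ⊢
    exact Prod.ext hfst hsnd
  -- the image is an antichain
  have hanti : IsAntichain (· ⊆ ·)
      ((Finset.univ.image F : Finset (Finset (Fin m ⊕ Fin m))) : Set (Finset (Fin m ⊕ Fin m))) := by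
    intro A hA B hB hne hsub
    simp only [Finset.coe_image, Set.mem_image] at hA hB
    obtain ⟨p, _, hp⟩ := hA
    obtain ⟨q, _, hq⟩ := hB
    subst hp hq
    apply hne
    by_contra hne'
    have hss : F p ⊂ F q := ⟨hsub, fun h => hne' (Finset.Subset.antisymm hsub h)⟩
    obtain ⟨a, haq, hap⟩ := Finset.exists_of_ssubset hss
    have hlt : ∑ b ∈ F p, Sum.elim (fun j => (x j : ℤ)) (fun j => (x j : ℤ)) b <
        ∑ b ∈ F q, Sum.elim (fun j => (x j : ℤ)) (fun j => (x j : ℤ)) b := by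
      apply Finset.sum_lt_sum_of_subset hsub haq hap
      · cases a with
        | inl j => simpa using Int.natCast_pos.2 (hx j)
        | inr j => simpa using Int.natCast_pos.2 (hx j)
      · intro b _ _
        cases b with
        | inl j => simp
        | inr j => simp
    rw [hweight p, hweight q] at hlt
    exact absurd hlt (lt_irrefl T)
  -- counting via Sperner
  set N : ℕ := Nat.card {ε : Fin m → ℤ // P ε} with hN
  have hcount : N * N ≤ (2 * m).choose m := by
    have h1 : (Finset.univ.image F).card = N * N := by
      rw [Finset.card_image_of_injective _ hinj, Finset.card_univ, Fintype.card_prod,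
        hN, Nat.card_eq_fintype_card]
    have h2 := IsAntichain.sperner hanti
    rw [h1] at h2
    have h3 : Fintype.card (Fin m ⊕ Fin m) = 2 * m := by
      simp [Fintype.card_sum, two_mul]
    rw [h3] at h2
    have h4 : 2 * m / 2 = m := by omega
    rwa [h4] at h2
  have hchoose : (2 * m).choose m ≤ 2 * (2 * m - 1).choose m := by
    rcases Nat.eq_zero_or_pos m with hm | hm
    · subst hm; simp
    · obtain ⟨k, rfl⟩ : ∃ k, m = k + 1 := ⟨m - 1, by omega⟩
      have h1 : 2 * (k + 1) = (2 * k + 1) + 1 := by ring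
      have h1' : 2 * (k + 1) - 1 = 2 * k + 1 := by omega
      rw [h1, Nat.add_sub_cancel, Nat.choose_succ_succ]
      have h3 : (2 * k + 1).choose k = (2 * k + 1).choose (k + 1) := by
        rw [← Nat.choose_symm (by omega : k + 1 ≤ 2 * k + 1)]
        congr 1
        omega
      rw [h3, Nat.succ_eq_add_one]
      omega
  -- conclude
  rw [Real.le_sqrt (by positivity) (by positivity)]
  have : ((N : ℝ)) ^ 2 = ((N * N : ℕ) : ℝ) := by push_cast; ring
  rw [this]
  have : (2 : ℝ) * ((2 * m - 1).choose m : ℝ) = ((2 * (2 * m - 1).choose m : ℕ) : ℝ) := by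
    push_cast; ring
  rw [this]
  exact_mod_cast le_trans hcount hchoose
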